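/- Additive drift theorem: let a, b ∈ ℤ with a ≤ b − 1, let δ > 0, and let (X_t)_{t ≥ 0} be a sequence of integer-valued random variables on a probability space with a ≤ X_t ≤ b almost surely for all t. Assume that for every t and every integer s with a < s < b one has E[(X_{t+1} − X_t)·𝟙{X_t = s}] ≥ δ·P(X_t = s), and that X_{t+1} = X_t almost surely on the event {X_t ∈ {a,b}}. Let T = inf{t ≥ 0 : X_t = a or X_t = b}. Then T is almost surely finite and E[T] ≤ (b − a) / min(δ, 1). -/

import Mathlib

open MeasureTheory
open scoped ENNReal

/-- additive drift theorem: if (X_t) takes values in [a,b] ∩ ℤ,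
has drift at least δ towards b away from the boundary, and is absorbed at the
boundary {a,b}, then the boundary hitting time T is a.s. finite and
E[T] ≤ (b−a)/min(δ,1). -/
theorem stmt_11 {Ω : Type*} [MeasurableSpace Ω] (μ : Measure Ω) [IsProbabilityMeasure μ]
    (a b : ℤ) (hab : a ≤ b - 1) (δ : ℝ) (hδ : 0 < δ)
    (X : ℕ → Ω → ℤ) (hXmeas : ∀ t, Measurable (X t))
    (hbound : ∀ t, ∀ᵐ ω ∂μ, a ≤ X t ω ∧ X t ω ≤ b)
    (hdrift : ∀ (t : ℕ) (s : ℤ), a < s → s < b →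
      δ * (μ {ω | X t ω = s}).toReal ≤
        ∫ ω, Set.indicator {ω' | X t ω' = s}
          (fun ω' => ((X (t + 1) ω' - X t ω' : ℤ) : ℝ)) ω ∂μ)
    (habsorb : ∀ t, ∀ᵐ ω ∂μ, (X t ω = a ∨ X t ω = b) → X (t + 1) ω = X t ω) :
    (∀ᵐ ω ∂μ, ∃ t, X t ω = a ∨ X t ω = b) ∧
    ∫⁻ ω, (⨅ (t : ℕ) (_ : X t ω = a ∨ X t ω = b), (t : ℝ≥0∞)) ∂μ ≤
      ENNReal.ofReal (((b - a : ℤ) : ℝ) / min δ 1) := by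
  have hcast : Measurable (fun x : ℤ => (x : ℝ)) := by measurability
  have hMs : ∀ t s, MeasurableSet {ω | X t ω = s} := fun t s =>
    (hXmeas t) (measurableSet_singleton s)
  have hMB : ∀ t, MeasurableSet {ω | X t ω = a ∨ X t ω = b} := fun t =>
    ((hMs t a).union (hMs t b))
  -- integrability of X t
  have hInt : ∀ t, Integrable (fun ω => ((X t ω : ℤ) : ℝ)) μ := by
    intro t
    refine (integrable_const (((|a| + |b| : ℤ) : ℝ))).mono'
      ((hcast.comp (hXmeas t)).aestronglyMeasurable) ?_
    filter_upwards [hbound t] with ω hω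
    rw [Real.norm_eq_abs, ← Int.cast_abs]
    have h1 : |X t ω| ≤ |a| + |b| := by
      rcases hω with ⟨h1, h2⟩
      have := le_abs_self b; have := neg_abs_le a
      have := abs_nonneg a; have := abs_nonneg b
      rw [abs_le]; constructor <;> linarith
    exact_mod_cast h1
  have hf : ∀ t, Integrable (fun ω => ((X (t + 1) ω - X t ω : ℤ) : ℝ)) μ := by
    intro t
    have := (hInt (t + 1)).sub (hInt t)
    convert this using 1
    funext ω
    simp
  -- measure of interior as a sum
  have hImeas : ∀ t, μ {ω | a < X t ω ∧ X t ω < b} =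
      ∑ s ∈ Finset.Ioo a b, μ {ω | X t ω = s} := by
    intro t
    have hI : {ω | a < X t ω ∧ X t ω < b} = ⋃ s ∈ Finset.Ioo a b, {ω | X t ω = s} := by
      ext ω
      simp only [Set.mem_setOf_eq, Set.mem_iUnion, Finset.mem_Ioo, exists_prop]
      constructor
      · rintro ⟨h1, h2⟩; exact ⟨X t ω, ⟨h1, h2⟩, rfl⟩
      · rintro ⟨s, hs, h⟩; subst h; exact hs
    rw [hI, measure_biUnion_finset ?_ (fun s _ => hMs t s)]
    intro s _ s' _ hss'
    refine Set.disjoint_left.mpr ?_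
    intro ω h1 h2
    exact hss' (h1.symm.trans h2)
  -- key drift inequality
  have hkey : ∀ t, δ * (μ {ω | a < X t ω ∧ X t ω < b}).toReal ≤
      ∫ ω, ((X (t + 1) ω - X t ω : ℤ) : ℝ) ∂μ := by
    intro t
    have hIntInd : ∀ s : ℤ, Integrable
        (fun ω => Set.indicator {ω' | X t ω' = s}
          (fun ω' => ((X (t + 1) ω' - X t ω' : ℤ) : ℝ)) ω) μ := fun s =>
      (hf t).indicator (hMs t s)
    -- decomposition over Icc
    have hdecomp : ∫ ω, ((X (t + 1) ω - X t ω : ℤ) : ℝ) ∂μ =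
        ∑ s ∈ Finset.Icc a b, ∫ ω, Set.indicator {ω' | X t ω' = s}
          (fun ω' => ((X (t + 1) ω' - X t ω' : ℤ) : ℝ)) ω ∂μ := by
      rw [← integral_finset_sum _ (fun s _ => hIntInd s)]
      refine integral_congr_ae ?_
      filter_upwards [hbound t] with ω hω
      simp only [Set.indicator_apply, Set.mem_setOf_eq]
      rw [Finset.sum_ite_eq]
      simp [Finset.mem_Icc, hω.1, hω.2]
    -- boundary terms vanish
    have hbdry : ∀ s : ℤ, (s = a ∨ s = b) →
        ∫ ω, Set.indicator {ω' | X t ω' = s}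
          (fun ω' => ((X (t + 1) ω' - X t ω' : ℤ) : ℝ)) ω ∂μ = 0 := by
      intro s hs
      have h0 : (fun ω => Set.indicator {ω' | X t ω' = s}
          (fun ω' => ((X (t + 1) ω' - X t ω' : ℤ) : ℝ)) ω) =ᵐ[μ] 0 := by
        filter_upwards [habsorb t] with ω hω
        by_cases h : X t ω = s
        · have hx : X (t + 1) ω = X t ω := by
            apply hω
            rcases hs with rfl | rfl
            · exact Or.inl h
            · exact Or.inr h
          simp [Set.indicator_apply, h, hx]
        · simp [Set.indicator_apply, h]
      rw [integral_congr_ae h0]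
      simp
    -- restrict the sum to the interior
    have hsub : ∑ s ∈ Finset.Icc a b, ∫ ω, Set.indicator {ω' | X t ω' = s}
          (fun ω' => ((X (t + 1) ω' - X t ω' : ℤ) : ℝ)) ω ∂μ =
        ∑ s ∈ Finset.Ioo a b, ∫ ω, Set.indicator {ω' | X t ω' = s}
          (fun ω' => ((X (t + 1) ω' - X t ω' : ℤ) : ℝ)) ω ∂μ := by
      refine (Finset.sum_subset ?_ ?_).symm
      · intro s hs
        simp only [Finset.mem_Ioo] at hs
        simp only [Finset.mem_Icc]
        omega
      · intro s hs hns
        simp only [Finset.mem_Icc] at hs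
        simp only [Finset.mem_Ioo] at hns
        exact hbdry s (by omega)
    rw [hdecomp, hsub, hImeas t, ENNReal.toReal_sum (fun s _ => measure_ne_top μ _),
      Finset.mul_sum]
    refine Finset.sum_le_sum ?_
    intro s hs
    simp only [Finset.mem_Ioo] at hs
    exact hdrift t s hs.1 hs.2
  -- telescoping bound
  have hsum : ∀ n : ℕ, δ * ∑ t ∈ Finset.range n,
      (μ {ω | a < X t ω ∧ X t ω < b}).toReal ≤ ((b - a : ℤ) : ℝ) := by
    intro n
    have htel : ∑ t ∈ Finset.range n, ∫ ω, ((X (t + 1) ω - X t ω : ℤ) : ℝ) ∂μ =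
        (∫ ω, ((X n ω : ℤ) : ℝ) ∂μ) - ∫ ω, ((X 0 ω : ℤ) : ℝ) ∂μ := by
      rw [← Finset.sum_range_sub (fun t => ∫ ω, ((X t ω : ℤ) : ℝ) ∂μ) n]
      refine Finset.sum_congr rfl ?_
      intro t _
      rw [← integral_sub (hInt (t + 1)) (hInt t)]
      refine integral_congr_ae ?_
      filter_upwards with ω
      push_cast
      ring
    have hup : ∫ ω, ((X n ω : ℤ) : ℝ) ∂μ ≤ (b : ℝ) := by
      have := integral_mono_ae (hInt n) (integrable_const ((b : ℤ) : ℝ)) ?_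
      · simpa using this
      · filter_upwards [hbound n] with ω hω
        exact_mod_cast hω.2
    have hlo : (a : ℝ) ≤ ∫ ω, ((X 0 ω : ℤ) : ℝ) ∂μ := by
      have := integral_mono_ae (integrable_const ((a : ℤ) : ℝ)) (hInt 0) ?_
      · simpa using this
      · filter_upwards [hbound 0] with ω hω
        exact_mod_cast hω.1
    have h1 : δ * ∑ t ∈ Finset.range n, (μ {ω | a < X t ω ∧ X t ω < b}).toReal ≤
        ∑ t ∈ Finset.range n, ∫ ω, ((X (t + 1) ω - X t ω : ℤ) : ℝ) ∂μ := by
      rw [Finset.mul_sum]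
      exact Finset.sum_le_sum fun t _ => hkey t
    rw [htel] at h1
    push_cast
    linarith
  -- tsum bound
  have htsum : ∑' t : ℕ, μ {ω | a < X t ω ∧ X t ω < b} ≤
      ENNReal.ofReal (((b - a : ℤ) : ℝ) / δ) := by
    rw [ENNReal.tsum_eq_iSup_sum]
    refine iSup_le fun s => ?_
    obtain ⟨n, hn⟩ : ∃ n, s ⊆ Finset.range n :=
      ⟨s.sup id + 1, fun x hx => Finset.mem_range.mpr (Nat.lt_succ_of_le (Finset.le_sup (f := id) hx))⟩
    calc ∑ t ∈ s, μ {ω | a < X t ω ∧ X t ω < b}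
        ≤ ∑ t ∈ Finset.range n, μ {ω | a < X t ω ∧ X t ω < b} :=
          Finset.sum_le_sum_of_subset hn
      _ = ENNReal.ofReal (∑ t ∈ Finset.range n, (μ {ω | a < X t ω ∧ X t ω < b}).toReal) := by
          rw [ENNReal.ofReal_sum_of_nonneg (fun _ _ => ENNReal.toReal_nonneg)]
          exact Finset.sum_congr rfl fun t _ => (ENNReal.ofReal_toReal (measure_ne_top μ _)).symm
      _ ≤ ENNReal.ofReal (((b - a : ℤ) : ℝ) / δ) := by
          refine ENNReal.ofReal_le_ofReal ?_
          rw [le_div_iff₀ hδ]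
          have := hsum n
          linarith
  -- a.e. equality of "not yet absorbed" and "interior"
  have hmuI : ∀ t, μ {ω | ¬(X t ω = a ∨ X t ω = b)} = μ {ω | a < X t ω ∧ X t ω < b} := by
    intro t
    refine measure_congr ?_
    rw [Filter.eventuallyEq_set]
    filter_upwards [hbound t] with ω hω
    show ¬(X t ω = a ∨ X t ω = b) ↔ a < X t ω ∧ X t ω < b
    omega
  -- a.s. finiteness
  have hae : ∀ᵐ ω ∂μ, ∃ t, X t ω = a ∨ X t ω = b := by
    rw [ae_iff]
    by_contra h
    have hc : ∀ t : ℕ, μ {ω | ¬∃ t, X t ω = a ∨ X t ω = b} ≤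
        μ {ω | a < X t ω ∧ X t ω < b} := by
      intro t
      rw [← hmuI t]
      refine measure_mono ?_
      intro ω hω
      simp only [Set.mem_setOf_eq, not_exists] at hω ⊢
      exact hω t
    have htop : (⊤ : ℝ≥0∞) ≤ ∑' t : ℕ, μ {ω | a < X t ω ∧ X t ω < b} := by
      calc (⊤ : ℝ≥0∞) = ∑' _ : ℕ, μ {ω | ¬∃ t, X t ω = a ∨ X t ω = b} :=
            (ENNReal.tsum_const_eq_top_of_ne_zero h).symm
        _ ≤ _ := ENNReal.tsum_le_tsum hc
    have hfin := le_trans htop htsum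
    rw [top_le_iff] at hfin
    exact ENNReal.ofReal_ne_top hfin
  refine ⟨hae, ?_⟩
  -- a.e. identification of the hitting time with a tsum of indicators
  have hgood : ∀ᵐ ω ∂μ, ∀ t, (X t ω = a ∨ X t ω = b) → X (t + 1) ω = X t ω :=
    (ae_all_iff).mpr habsorb
  have hTeq : ∀ᵐ ω ∂μ, (⨅ (t : ℕ) (_ : X t ω = a ∨ X t ω = b), (t : ℝ≥0∞)) =
      ∑' t : ℕ, Set.indicator {ω' | ¬(X t ω' = a ∨ X t ω' = b)} (fun _ => (1 : ℝ≥0∞)) ω := by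
    filter_upwards [hgood, hae] with ω habs hex
    have hmono : ∀ s t : ℕ, s ≤ t → (X s ω = a ∨ X s ω = b) → (X t ω = a ∨ X t ω = b) := by
      intro s t hst hs
      induction hst with
      | refl => exact hs
      | step _ ih => rw [habs _ ih]; exact ih
    set n := Nat.find hex with hn
    have hBn : X n ω = a ∨ X n ω = b := Nat.find_spec hex
    have hlt : ∀ t, (X t ω = a ∨ X t ω = b) ↔ n ≤ t := fun t =>
      ⟨fun h => Nat.find_min' hex h, fun h => hmono n t h hBn⟩
    have hL : (⨅ (t : ℕ) (_ : X t ω = a ∨ X t ω = b), (t : ℝ≥0∞)) = (n : ℝ≥0∞) := by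
      refine le_antisymm (iInf_le_of_le n (iInf_le_of_le hBn le_rfl)) ?_
      simp only [le_iInf_iff]
      intro t ht
      exact_mod_cast (hlt t).1 ht
    have hind : ∀ t : ℕ, Set.indicator {ω' | ¬(X t ω' = a ∨ X t ω' = b)}
        (fun _ => (1 : ℝ≥0∞)) ω = if t < n then 1 else 0 := by
      intro t
      by_cases h : t < n
      · rw [if_pos h, Set.indicator_of_mem]
        intro hb
        exact absurd ((hlt t).1 hb) (by omega)
      · rw [if_neg h, Set.indicator_of_notMem]
        exact not_not_intro ((hlt t).2 (le_of_not_gt h))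
    rw [hL, tsum_congr hind, tsum_eq_sum (s := Finset.range n)
      (fun t ht => if_neg (by simpa using ht)),
      Finset.sum_congr rfl (fun t ht => if_pos (Finset.mem_range.mp ht))]
    simp
  calc ∫⁻ ω, (⨅ (t : ℕ) (_ : X t ω = a ∨ X t ω = b), (t : ℝ≥0∞)) ∂μ
      = ∫⁻ ω, ∑' t : ℕ, Set.indicator {ω' | ¬(X t ω' = a ∨ X t ω' = b)}
          (fun _ => (1 : ℝ≥0∞)) ω ∂μ := lintegral_congr_ae hTeq
    _ = ∑' t : ℕ, ∫⁻ ω, Set.indicator {ω' | ¬(X t ω' = a ∨ X t ω' = b)}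
          (fun _ => (1 : ℝ≥0∞)) ω ∂μ :=
        lintegral_tsum fun t => ((measurable_one.indicator (hMB t).compl).aemeasurable)
    _ = ∑' t : ℕ, μ {ω | ¬(X t ω = a ∨ X t ω = b)} := by
        refine tsum_congr fun t => ?_
        exact lintegral_indicator_one (hMB t).compl
    _ = ∑' t : ℕ, μ {ω | a < X t ω ∧ X t ω < b} := tsum_congr hmuI
    _ ≤ ENNReal.ofReal (((b - a : ℤ) : ℝ) / δ) := htsum
    _ ≤ ENNReal.ofReal (((b - a : ℤ) : ℝ) / min δ 1) := by
        refine ENNReal.ofReal_le_ofReal ?_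
        have hnum : (0 : ℝ) ≤ ((b - a : ℤ) : ℝ) := by exact_mod_cast (by omega : (0 : ℤ) ≤ b - a)
        have hmin : (0 : ℝ) < min δ 1 := lt_min hδ one_pos
        exact div_le_div_of_nonneg_left hnum hmin (min_le_left _ _)
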